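/- Let L be a finite-dimensional Lie algebra over ℂ equipped with a ℤ-grading (L_i)_{i∈ℤ} admitting a level operator d ∈ L_0 (so ⁅d,x⁆ = i·x for all x ∈ L_i and all i). Suppose 𝔤₀ is a Lie subalgebra of L_0 and 𝔨₀ a subspace of L_0 with L_0 = 𝔤₀ ⊕ 𝔨₀ (internal direct sum) and ⁅𝔤₀, 𝔨₀⁆ ⊆ 𝔨₀. Set 𝒞 := {c ∈ 𝔨₀ | ⁅c, x⁆ = 0 for all x ∈ 𝔤₀}, and assume that every element c ∈ 𝒞 with ⁅c, 𝒞⁆ = 0 lies in the centre Z(L). Then d = d₀ + z for some d₀ ∈ 𝔤₀ with ⁅d₀, 𝔤₀⁆ = 0 and some z ∈ Z(L). -/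
import Mathlib


/-- For a normal-type ℤ-graded Lie algebra, the level operator decomposes as
`d = d₀ + z` with `d₀ ∈ Z(𝔤₀)` and `z ∈ Z(L)`. -/
theorem statement10 (L : Type*) [LieRing L] [LieAlgebra ℂ L] [FiniteDimensional ℂ L]
    (Lg : ℤ → Submodule ℂ L)
    (hfin : {i : ℤ | Lg i ≠ ⊥}.Finite)
    (hdecomp : DirectSum.IsInternal Lg)
    (hbracket : ∀ i j : ℤ, ∀ x ∈ Lg i, ∀ y ∈ Lg j, ⁅x, y⁆ ∈ Lg (i + j))
    (d : L) (hd0 : d ∈ Lg 0) (hd : ∀ i : ℤ, ∀ x ∈ Lg i, ⁅d, x⁆ = (i : ℂ) • x)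
    (g0 : LieSubalgebra ℂ L) (k0 : Submodule ℂ L)
    (hg0 : g0.toSubmodule ≤ Lg 0) (hk0 : k0 ≤ Lg 0)
    (hsum : g0.toSubmodule ⊔ k0 = Lg 0)
    (hdisj : Disjoint g0.toSubmodule k0)
    (hgk : ∀ g ∈ g0, ∀ y ∈ k0, ⁅g, y⁆ ∈ k0)
    (hC : ∀ c ∈ k0, (∀ x ∈ g0, ⁅c, x⁆ = 0) →
      (∀ c' ∈ k0, (∀ x ∈ g0, ⁅c', x⁆ = 0) → ⁅c, c'⁆ = 0) →
      c ∈ LieAlgebra.center ℂ L) :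
    ∃ d₀ z : L, d₀ ∈ g0 ∧ (∀ g ∈ g0, ⁅d₀, g⁆ = 0) ∧
      z ∈ LieAlgebra.center ℂ L ∧ d = d₀ + z := by
  have hdsup : d ∈ g0.toSubmodule ⊔ k0 := hsum ▸ hd0
  obtain ⟨d₀, hd₀g, z, hzk, hdz⟩ := Submodule.mem_sup.mp hdsup
  -- d acts as 0 on L_0
  have hdL0 : ∀ x ∈ Lg 0, ⁅d, x⁆ = 0 := by
    intro x hx
    have := hd 0 x hx
    simpa using this
  -- key splitting: for g ∈ g0, both bracket pieces vanish
  have key : ∀ g ∈ g0, ⁅d₀, g⁆ = 0 ∧ ⁅z, g⁆ = 0 := by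
    intro g hg
    have h1 : ⁅d₀, g⁆ + ⁅z, g⁆ = 0 := by
      rw [← add_lie, hdz]
      exact hdL0 g (hg0 hg)
    have h2 : ⁅d₀, g⁆ ∈ g0.toSubmodule := g0.lie_mem hd₀g hg
    have h3 : ⁅z, g⁆ ∈ k0 := by
      have hk := k0.neg_mem (hgk g hg z hzk)
      rwa [lie_skew] at hk
    have h4 : ⁅d₀, g⁆ ∈ k0 := by
      have : ⁅d₀, g⁆ = -⁅z, g⁆ := eq_neg_of_add_eq_zero_left h1
      rw [this]; exact k0.neg_mem h3
    have hz0 : ⁅d₀, g⁆ = 0 := (Submodule.mem_bot ℂ).mp (hdisj.le_bot ⟨h2, h4⟩)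
    refine ⟨hz0, ?_⟩
    have := h1
    rw [hz0, zero_add] at this
    exact this
  have hzC : ∀ x ∈ g0, ⁅z, x⁆ = 0 := fun x hx => (key x hx).2
  have hzC' : ∀ c' ∈ k0, (∀ x ∈ g0, ⁅c', x⁆ = 0) → ⁅z, c'⁆ = 0 := by
    intro c' hc' hcomm
    have h1 : ⁅d₀, c'⁆ + ⁅z, c'⁆ = 0 := by
      rw [← add_lie, hdz]
      exact hdL0 c' (hk0 hc')
    have h2 : ⁅d₀, c'⁆ = 0 := by
      have := hcomm d₀ hd₀g
      have h := congrArg Neg.neg this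
      rw [lie_skew] at h
      simpa using h
    rw [h2, zero_add] at h1
    exact h1
  refine ⟨d₀, z, hd₀g, fun g hg => (key g hg).1, hC z hzk hzC hzC', hdz.symm⟩
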